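/- Transitivity of the betterness relation validates Lewis's axiom CV: in every preference model M = (W, ≽, V) whose relation ≽ is transitive, every world satisfies every instance of the schema (○(ψ/φ) ∧ ¬○(¬χ/φ)) → ○(ψ/(φ∧χ)). -/
import Mathlib


/-- Formulas of Åqvist's dyadic deontic logic **E**:
`φ ::= p | ¬φ | φ∧φ | □φ | ○(φ/φ)`.
`EForm.ob ψ φ` denotes `○(ψ/φ)` ("ψ is obligatory, given φ"). -/
inductive EForm : Type where
  | atom : ℕ → EForm
  | neg  : EForm → EForm
  | conj : EForm → EForm → EForm
  | box  : EForm → EForm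
  | ob   : EForm → EForm → EForm
deriving DecidableEq

/-- Material implication, defined classically. -/
def EForm.impl (φ ψ : EForm) : EForm := .neg (.conj φ (.neg ψ))

/-- Biconditional. -/
def EForm.iff' (φ ψ : EForm) : EForm := .conj (φ.impl ψ) (ψ.impl φ)

/-- A preference model `M = (W, ≽, V)`: a nonempty set of worlds, a betterness
relation, and a valuation. -/
structure PrefModel where
  W : Type
  ne : Nonempty W
  R : W → W → Prop
  V : ℕ → W → Prop

/-- Satisfaction `M,s ⊨ φ`. In particular
`M,s ⊨ ○(ψ/φ)` iff `opt_≽(‖φ‖) ⊆ ‖ψ‖`, where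
`opt_≽(‖φ‖) = {w ∈ ‖φ‖ : ∀ y, (M,y ⊨ φ) → w ≽ y}`. -/
def PrefModel.sat (M : PrefModel) : M.W → EForm → Prop
  | s, .atom n   => M.V n s
  | s, .neg φ    => ¬ PrefModel.sat M s φ
  | s, .conj φ ψ => PrefModel.sat M s φ ∧ PrefModel.sat M s ψ
  | _, .box φ    => ∀ t, PrefModel.sat M t φ
  | _, .ob ψ φ   => ∀ w, (PrefModel.sat M w φ ∧ ∀ y, PrefModel.sat M y φ → M.R w y) →
                     PrefModel.sat M w ψ

/-- Validity in the class of all preference models. -/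
def EValid (φ : EForm) : Prop := ∀ (M : PrefModel) (s : M.W), M.sat s φ

/-- **Transitivity of betterness validates Lewis's axiom CV**: in every
preference model with transitive `≽`, every world satisfies every instance of
`(○(ψ/φ) ∧ ¬○(¬χ/φ)) → ○(ψ/(φ∧χ))`. -/
theorem transitive_validates_CV :
    ∀ M : PrefModel, Transitive M.R →
      ∀ (φ ψ χ : EForm) (s : M.W),
        M.sat s ((EForm.conj (EForm.ob ψ φ) (EForm.neg (EForm.ob (EForm.neg χ) φ))).impl
          (EForm.ob ψ (EForm.conj φ χ))) := by
  intro M htr φ ψ χ s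
  simp only [EForm.impl, PrefModel.sat]
  push_neg
  intro h
  obtain ⟨h1, h2⟩ := h
  obtain ⟨w, ⟨hwφ, hwopt⟩, hwχ⟩ := h2
  intro v ⟨⟨hvφ, hvχ⟩, hvopt⟩
  have hvw : M.R v w := hvopt w ⟨hwφ, hwχ⟩
  exact h1 v ⟨hvφ, fun y hy => htr hvw (hwopt y hy)⟩
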